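/- arXiv:2412.03540 — 3 statements merged into one kernel-verified Lean document; each statement's English description precedes it below -/
import Mathlib

section
/- Let X be a finite set, λ : X → [0,1], let H ⊆ X with a fixed ordering h_1, …, h_{|H|} of its elements such that λ(h_1) ≥ λ(h_2) ≥ … ≥ λ(h_{|H|}), and let W ⊆ X. Then, for b = b(W,H,λ), we have |H_{<b} ∩ W| ≤ (1/2)|H_{<b}|. -/
open Finset

variable {α : Type*}

/-- `wsum lam S = ∑_{x ∈ S} lam x`. -/
noncomputable def wsum (lam : α → ℝ) (S : Finset α) : ℝ := ∑ x ∈ S, lam x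

/-- Probability that the random subset `X_q` equals `W`. -/
noncomputable def prb [Fintype α] (q : ℝ) (W : Finset α) : ℝ :=
  q ^ W.card * (1 - q) ^ (Fintype.card α - W.card)

/-- `G` is a cover of the family `ℋ`. -/
def IsCover (G ℋ : Finset (Finset α)) : Prop := ∀ H ∈ ℋ, ∃ B ∈ G, B ⊆ H

/-- `ℋ` is `p`-small. -/
def IsSmall (p : ℝ) (ℋ : Finset (Finset α)) : Prop :=
  ∃ G : Finset (Finset α), IsCover G ℋ ∧ ∑ B ∈ G, p ^ B.card ≤ 1 / 2

/-- `l` is an ordering of `H` with weights `lam` in non-increasing order. -/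
def IsOrdering [DecidableEq α] (lam : α → ℝ) (H : Finset α) (l : List α) : Prop :=
  l.Nodup ∧ l.toFinset = H ∧ l.Pairwise fun a b => lam b ≤ lam a

/-- The cut index: the smallest number `k` of removed top elements so that
`lam (W ∩ H_{≥ k+1}) ≥ (1/2) lam (H_{≥ k+1})`.  (So `b(W,H,λ) = cutIndex + 1`.) -/
noncomputable def cutIndex [DecidableEq α] (lam : α → ℝ) (W : Finset α) (l : List α) : ℕ :=
  sInf {k : ℕ | (1 / 2) * wsum lam (l.drop k).toFinset ≤ wsum lam (W ∩ (l.drop k).toFinset)}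

/-- One step of the procedure: `H_{i+1} = (H_i)_{≥ b_i} \ W_i`, as ordered lists. -/
noncomputable def stepList [DecidableEq α] (lam : α → ℝ) (W : Finset α) (l : List α) : List α :=
  (l.drop (cutIndex lam W l)).filter fun x => decide (x ∉ W)

/-- The procedure: `procList lam Ws l0 i` is (the ordered list of) `H_{i+1}`, `H_1 = l0`. -/
noncomputable def procList [DecidableEq α] (lam : α → ℝ) (Ws : ℕ → Finset α) (l0 : List α) :
    ℕ → List α
  | 0 => l0
  | i + 1 => stepList lam (Ws i) (procList lam Ws l0 i)

/-- `bIdx lam Ws l0 i = b(W_{i+1}, H_{i+1}, lam) - 1` (0-indexed version of `b_i`). -/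
noncomputable def bIdx [DecidableEq α] (lam : α → ℝ) (Ws : ℕ → Finset α) (l0 : List α)
    (i : ℕ) : ℕ :=
  cutIndex lam (Ws i) (procList lam Ws l0 i)

/-- `Rfrag lam Ws l0 i = R_{i+1}(W, H) = (H_{i+1})_{< b_{i+1}}` (0-indexed). -/
noncomputable def Rfrag [DecidableEq α] (lam : α → ℝ) (Ws : ℕ → Finset α) (l0 : List α)
    (i : ℕ) : Finset α :=
  ((procList lam Ws l0 i).take (bIdx lam Ws l0 i)).toFinset

/-- Extend a tuple indexed by `Fin s` to one indexed by `ℕ`. -/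
def extT {s : ℕ} (Ws : Fin s → Finset α) : ℕ → Finset α :=
  fun i => if h : i < s then Ws ⟨i, h⟩ else ∅

/-- `Z` is `(b, t)`-feasible: there are `W'_i ⊆ Z_i` with `|W'_i| = |Z_i| - t_i` and `H' ∈ ℋ`
such that `b = b(W', H')` and `Z_i ⊇ R_i(W', H')` for all `i`. -/
def Feasible [DecidableEq α] (ℋ : Finset (Finset α)) (lam : Finset α → α → ℝ)
    (ord : Finset α → List α) {s : ℕ} (b t : Fin s → ℕ) (Z : Fin s → Finset α) : Prop :=
  ∃ (W' : Fin s → Finset α) (H' : Finset α), H' ∈ ℋ ∧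
    (∀ i : Fin s, W' i ⊆ Z i ∧ (W' i).card = (Z i).card - t i) ∧
    (∀ i : Fin s, b i = bIdx (lam H') (extT W') (ord H') i) ∧
    (∀ i : Fin s, Rfrag (lam H') (extT W') (ord H') i ⊆ Z i)

/-- `T` is a tower of fragments of `(Ws, H)`. -/
def IsTower [DecidableEq α] (ℋ : Finset (Finset α)) (lam : Finset α → α → ℝ)
    (ord : Finset α → List α) {s : ℕ} (Ws : Fin s → Finset α) (H : Finset α)
    (T : Fin s → Finset α) : Prop :=
  (∃ b : Fin s → ℕ,
      Feasible ℋ lam ord b (fun i => (T i).card) (fun i => Ws i ∪ T i)) ∧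
    univ.biUnion T ⊆ H

/-- Lexicographic order on size vectors. -/
def lexLe {s : ℕ} (a c : Fin s → ℕ) : Prop :=
  a = c ∨ ∃ i : Fin s, a i < c i ∧ ∀ j : Fin s, j < i → a j = c j

/-- `T` is a minimum tower of fragments of `(Ws, H)`. -/
def IsMinTower [DecidableEq α] (ℋ : Finset (Finset α)) (lam : Finset α → α → ℝ)
    (ord : Finset α → List α) {s : ℕ} (Ws : Fin s → Finset α) (H : Finset α)
    (T : Fin s → Finset α) : Prop :=
  IsTower ℋ lam ord Ws H T ∧
    ∀ T' : Fin s → Finset α, IsTower ℋ lam ord Ws H T' →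
      lexLe (fun i => (T i).card) (fun i => (T' i).card)

/-- `(W_1, …, W_s)` is bad: no `H ∈ ℋ` captures weight at least `1 - 2^{-s}`. -/
def IsBad [DecidableEq α] (ℋ : Finset (Finset α)) (lam : Finset α → α → ℝ) {s : ℕ}
    (Ws : Fin s → Finset α) : Prop :=
  ∀ H ∈ ℋ, wsum (lam H) (univ.biUnion Ws ∩ H) < 1 - (1 / 2) ^ s

open scoped Classical

private lemma abel_aux (a e : ℕ → ℝ) (hmono : ∀ i j, i ≤ j → a j ≤ a i) :
    ∀ M : ℕ, (∀ m ≤ M, 0 ≤ ∑ i ∈ Finset.range m, e i) →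
      (∑ i ∈ Finset.range M, e i) * a M ≤ ∑ i ∈ Finset.range M, e i * a i := by
  intro M
  induction M with
  | zero => intro _; simp
  | succ M ih =>
    intro hS
    have h1 := ih fun m hm => hS m (hm.trans (Nat.le_succ M))
    have h2 : (∑ i ∈ Finset.range (M + 1), e i) * a (M + 1)
        ≤ (∑ i ∈ Finset.range (M + 1), e i) * a M :=
      mul_le_mul_of_nonneg_left (hmono M (M + 1) (Nat.le_succ M)) (hS (M + 1) le_rfl)
    rw [Finset.sum_range_succ, add_mul] at h2
    rw [Finset.sum_range_succ, Finset.sum_range_succ, add_mul]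
    linarith

theorem large_weight_small_intersection {α : Type*} [Fintype α] [DecidableEq α]
    (lam : α → ℝ) (h01 : ∀ x, 0 ≤ lam x ∧ lam x ≤ 1)
    (l : List α) (hnd : l.Nodup) (hsorted : l.Pairwise fun a b => lam b ≤ lam a)
    (W : Finset α) :
    (((l.take (cutIndex lam W l)).toFinset ∩ W).card : ℝ)
      ≤ (1 / 2) * ((l.take (cutIndex lam W l)).toFinset.card : ℝ) := by
  classical
  -- index functions
  set a : ℕ → ℝ := fun i => if h : i < l.length then lam (l.get ⟨i, h⟩) else 0 with ha
  set e : ℕ → ℝ := fun i =>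
    if h : i < l.length then (if l.get ⟨i, h⟩ ∈ W then (1 : ℝ) else -1) else 0 with he
  have ha0 : ∀ i, 0 ≤ a i := by
    intro i
    simp only [ha]
    by_cases h : i < l.length
    · rw [dif_pos h]; exact (h01 _).1
    · rw [dif_neg h]
  have hamono : ∀ i j, i ≤ j → a j ≤ a i := by
    intro i j hij
    simp only [ha]
    by_cases hj : j < l.length
    · have hi : i < l.length := lt_of_le_of_lt hij hj
      rw [dif_pos hi, dif_pos hj]
      rcases eq_or_lt_of_le hij with rfl | hlt
      · exact le_rfl
      · exact hsorted.rel_get_of_lt (show (⟨i, hi⟩ : Fin l.length) < ⟨j, hj⟩ from hlt)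
    · rw [dif_neg hj]
      by_cases hi : i < l.length
      · rw [dif_pos hi]; exact (h01 _).1
      · rw [dif_neg hi]
  -- sum over drop as indexed sum
  have Hsum : ∀ (f : α → ℝ) (m j : ℕ), l.length - j ≤ m →
      ∑ x ∈ (l.drop j).toFinset, f x
        = ∑ i ∈ Finset.Ico j l.length,
            (if h : i < l.length then f (l.get ⟨i, h⟩) else 0) := by
    intro f m
    induction m with
    | zero =>
      intro j hj
      have hj' : l.length ≤ j := by omega
      rw [List.drop_eq_nil_of_le hj', Finset.Ico_eq_empty (by omega)]
      simp
    | succ m ih =>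
      intro j hj
      by_cases h : j < l.length
      · have hd : l.drop j = l.get ⟨j, h⟩ :: l.drop (j + 1) := List.drop_eq_getElem_cons h
        have hnd' : (l.drop j).Nodup := List.Nodup.sublist (List.drop_sublist _ _) hnd
        rw [hd] at hnd'
        have hnotmem : l.get ⟨j, h⟩ ∉ (l.drop (j + 1)).toFinset := by
          rw [List.mem_toFinset]
          exact (List.nodup_cons.mp hnd').1
        rw [hd, List.toFinset_cons, Finset.sum_insert hnotmem, ih (j + 1) (by omega),
          Finset.sum_eq_sum_Ico_succ_bot h, dif_pos h]
      · have hj' : l.length ≤ j := by omega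
        rw [List.drop_eq_nil_of_le hj', Finset.Ico_eq_empty (by omega)]
        simp
  -- the cut condition in indexed form
  have key : ∀ j : ℕ,
      ((1 / 2) * wsum lam (l.drop j).toFinset ≤ wsum lam (W ∩ (l.drop j).toFinset))
      ↔ 0 ≤ ∑ i ∈ Finset.Ico j l.length, e i * a i := by
    intro j
    have hA : wsum lam (l.drop j).toFinset = ∑ i ∈ Finset.Ico j l.length, a i := by
      simp only [wsum]
      rw [Hsum lam l.length j (Nat.sub_le _ _)]
    have hW : wsum lam (W ∩ (l.drop j).toFinset)
        = ∑ i ∈ Finset.Ico j l.length, (e i * a i + a i) / 2 := by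
      simp only [wsum]
      rw [Finset.inter_comm, ← Finset.filter_mem_eq_inter, Finset.sum_filter,
        Hsum (fun x => if x ∈ W then lam x else 0) l.length j (Nat.sub_le _ _)]
      refine Finset.sum_congr rfl fun i _ => ?_
      simp only [ha, he]
      by_cases h : i < l.length
      · rw [dif_pos h, dif_pos h, dif_pos h]
        by_cases hw : l.get ⟨i, h⟩ ∈ W
        · rw [if_pos hw, if_pos hw]; ring
        · rw [if_neg hw, if_neg hw]; ring
      · rw [dif_neg h, dif_neg h, dif_neg h]; ring
    have hsplit : ∑ i ∈ Finset.Ico j l.length, (e i * a i + a i) / 2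
        = ((∑ i ∈ Finset.Ico j l.length, e i * a i)
            + ∑ i ∈ Finset.Ico j l.length, a i) / 2 := by
      rw [← Finset.sum_add_distrib, Finset.sum_div]
    rw [hA, hW, hsplit]
    constructor <;> intro h <;> linarith
  -- basic facts about the cut index
  have hnmem : l.length ∈ {k : ℕ | (1 / 2) * wsum lam (l.drop k).toFinset
      ≤ wsum lam (W ∩ (l.drop k).toFinset)} := by
    simp [Set.mem_setOf_eq, List.drop_length, wsum]
  have hk_le : cutIndex lam W l ≤ l.length := Nat.sInf_le hnmem
  have hk0 : 0 ≤ ∑ i ∈ Finset.Ico (cutIndex lam W l) l.length, e i * a i :=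
    (key _).mp (Nat.sInf_mem ⟨_, hnmem⟩)
  have hjneg : ∀ j < cutIndex lam W l,
      ∑ i ∈ Finset.Ico j l.length, e i * a i < 0 := by
    intro j hj
    have h1 : j ∉ {k : ℕ | (1 / 2) * wsum lam (l.drop k).toFinset
        ≤ wsum lam (W ∩ (l.drop k).toFinset)} := Nat.notMem_of_lt_sInf hj
    have h2 := (key j).not.mp h1
    linarith [not_le.mp h2]
  set k := cutIndex lam W l with hkdef
  have hseg : ∀ j < k, ∑ i ∈ Finset.Ico j k, e i * a i < 0 := by
    intro j hj
    have hc := Finset.sum_Ico_consecutive (fun i => e i * a i) (le_of_lt hj) hk_le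
    have := hjneg j hj
    linarith
  -- main claim : prefix has at most half its indices in W
  have hmain : ∑ i ∈ Finset.range k, e i ≤ 0 := by
    by_contra hpos
    push_neg at hpos
    set S : ℕ → ℝ := fun j => ∑ i ∈ Finset.Ico j k, e i with hS
    obtain ⟨j, hjmem, hjmax⟩ := Finset.exists_max_image (Finset.range (k + 1)) S
      ⟨0, Finset.mem_range.mpr (Nat.succ_pos _)⟩
    have hjk : j ≤ k := by
      have := Finset.mem_range.mp hjmem; omega
    have hSk : S k = 0 := by simp [hS]
    have hS0 : 0 < S 0 := by
      have : S 0 = ∑ i ∈ Finset.range k, e i := by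
        rw [Finset.range_eq_Ico]
      rw [this]; exact hpos
    have hjlt : j < k := by
      rcases lt_or_eq_of_le hjk with h | rfl
      · exact h
      · exfalso
        have h0 := hjmax 0 (Finset.mem_range.mpr (Nat.succ_pos _))
        rw [hSk] at h0
        linarith
    have hpre : ∀ m ≤ k - j, 0 ≤ ∑ i ∈ Finset.range m, e (j + i) := by
      intro m hm
      have h1 : ∑ i ∈ Finset.Ico j (j + m), e i = ∑ i ∈ Finset.range m, e (j + i) := by
        rw [Finset.sum_Ico_eq_sum_range]
        simp
      have h2 : S (j + m) ≤ S j := hjmax (j + m) (Finset.mem_range.mpr (by omega))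
      have h3 := Finset.sum_Ico_consecutive e (Nat.le_add_right j m)
        (show j + m ≤ k by omega)
      have h4 : S j = ∑ i ∈ Finset.Ico j k, e i := rfl
      have h5 : S (j + m) = ∑ i ∈ Finset.Ico (j + m) k, e i := rfl
      rw [← h1]
      linarith
    have habel := abel_aux (fun i => a (j + i)) (fun i => e (j + i))
      (fun i i' hii' => hamono (j + i) (j + i') (by omega)) (k - j) hpre
    have hfin : 0 ≤ ∑ i ∈ Finset.Ico j k, e i * a i := by
      have h1 : ∑ i ∈ Finset.Ico j k, e i * a i
          = ∑ i ∈ Finset.range (k - j), e (j + i) * a (j + i) := by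
        rw [Finset.sum_Ico_eq_sum_range]
      have h2 : 0 ≤ (∑ i ∈ Finset.range (k - j), e (j + i)) * a (j + (k - j)) :=
        mul_nonneg (hpre (k - j) le_rfl) (ha0 _)
      rw [h1]
      calc (0 : ℝ) ≤ (∑ i ∈ Finset.range (k - j), e (j + i)) * a (j + (k - j)) := h2
        _ ≤ ∑ i ∈ Finset.range (k - j), e (j + i) * a (j + i) := habel
    exact absurd hfin (not_le.mpr (hseg j hjlt))
  -- now compute the cardinalities
  have hTnd : (l.take k).Nodup := List.Nodup.sublist (List.take_sublist _ _) hnd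
  have hTcard : (l.take k).toFinset.card = k := by
    rw [List.toFinset_card_of_nodup hTnd, List.length_take]
    omega
  have hdisj : Disjoint (l.take k).toFinset (l.drop k).toFinset := by
    rw [List.disjoint_toFinset_iff_disjoint]
    have h := hnd
    rw [← List.take_append_drop k l, List.nodup_append] at h
    intro x hx1 hx2; exact h.2.2 x hx1 x hx2 rfl
  have hunion : l.toFinset = (l.take k).toFinset ∪ (l.drop k).toFinset := by
    rw [← List.toFinset_append, List.take_append_drop]
  have hsplitF : (l.take k).toFinset = l.toFinset \ (l.drop k).toFinset := by
    rw [hunion, Finset.union_sdiff_cancel_right hdisj]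
  set c : ℕ → ℝ := fun i =>
    if h : i < l.length then (if l.get ⟨i, h⟩ ∈ W then (1 : ℝ) else 0) else 0 with hc
  have hcount : (((l.take k).toFinset ∩ W).card : ℝ) = ∑ i ∈ Finset.range k, c i := by
    have h1 : (((l.take k).toFinset ∩ W).card : ℝ)
        = ∑ x ∈ (l.take k).toFinset, (if x ∈ W then (1 : ℝ) else 0) := by
      rw [← Finset.filter_mem_eq_inter, Finset.sum_boole]
    have h2 : ∑ x ∈ (l.take k).toFinset, (if x ∈ W then (1 : ℝ) else 0)
        = (∑ x ∈ l.toFinset, (if x ∈ W then (1 : ℝ) else 0))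
          - ∑ x ∈ (l.drop k).toFinset, (if x ∈ W then (1 : ℝ) else 0) := by
      rw [hsplitF]
      have hsub : (l.drop k).toFinset ⊆ l.toFinset := by
        intro x hx
        rw [List.mem_toFinset] at hx ⊢
        exact (List.drop_sublist _ _).mem hx
      have := Finset.sum_sdiff (f := fun x => if x ∈ W then (1 : ℝ) else 0) hsub
      linarith
    have h3 : ∑ x ∈ l.toFinset, (if x ∈ W then (1 : ℝ) else 0)
        = ∑ i ∈ Finset.Ico 0 l.length, c i := by
      have : l.toFinset = (l.drop 0).toFinset := by rw [List.drop_zero]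
      rw [this, Hsum (fun x => if x ∈ W then (1 : ℝ) else 0) l.length 0 (Nat.sub_le _ _)]
    have h4 : ∑ x ∈ (l.drop k).toFinset, (if x ∈ W then (1 : ℝ) else 0)
        = ∑ i ∈ Finset.Ico k l.length, c i := by
      rw [Hsum (fun x => if x ∈ W then (1 : ℝ) else 0) l.length k (Nat.sub_le _ _)]
    have h5 := Finset.sum_Ico_consecutive c (Nat.zero_le k) hk_le
    rw [h1, h2, h3, h4, Finset.range_eq_Ico]
    linarith
  have hce : ∀ i < k, c i = (e i + 1) / 2 := by
    intro i hik
    have h : i < l.length := lt_of_lt_of_le hik hk_le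
    simp only [hc, he]
    rw [dif_pos h, dif_pos h]
    by_cases hw : l.get ⟨i, h⟩ ∈ W
    · rw [if_pos hw, if_pos hw]; norm_num
    · rw [if_neg hw, if_neg hw]; norm_num
  have hsum_c : ∑ i ∈ Finset.range k, c i
      = ((∑ i ∈ Finset.range k, e i) + k) / 2 := by
    rw [Finset.sum_congr rfl fun i hi => hce i (Finset.mem_range.mp hi)]
    rw [← Finset.sum_div, Finset.sum_add_distrib, Finset.sum_const, Finset.card_range,
      nsmul_eq_mul, mul_one]
  rw [hTcard, hcount, hsum_c]
  push_cast
  linarith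
end

section
/- Let X be a finite set and H ⊆ 2^X with weight vectors λ_H : X → [0,1] supported on H satisfying ∑_{x∈H} λ_H(x) ≥ 1 for each H ∈ H. Let W = (W_1,…,W_s) be a tuple of subsets of X which is bad, i.e. ∑_{x ∈ (W_1 ∪ … ∪ W_s) ∩ H} λ_H(x) < 1 − 2^{−s} for every H ∈ H. Then every tower of fragments (T_1,…,T_s) of (W,H) for any H ∈ H is nonempty, in the sense that ∑_{i=1}^s |T_i| > 0. -/
open Finset

variable {α : Type*}

open scoped Classical

lemma wsum_nonneg' (lam : α → ℝ) (h : ∀ x, 0 ≤ lam x) (S : Finset α) : 0 ≤ wsum lam S :=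
  Finset.sum_nonneg fun x _ => h x

lemma wsum_mono' (lam : α → ℝ) (h : ∀ x, 0 ≤ lam x) {A B : Finset α} (hAB : A ⊆ B) :
    wsum lam A ≤ wsum lam B :=
  Finset.sum_le_sum_of_subset_of_nonneg hAB fun x _ _ => h x

lemma wsum_sdiff' [DecidableEq α] (lam : α → ℝ) (D W : Finset α) :
    wsum lam (D \ W) = wsum lam D - wsum lam (D ∩ W) := by
  rw [← Finset.sdiff_inter_self_left]
  unfold wsum
  rw [Finset.sum_sdiff_eq_sub Finset.inter_subset_left]

lemma cutIndex_spec [DecidableEq α] (lam : α → ℝ) (W : Finset α) (l : List α) :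
    (1 / 2) * wsum lam (l.drop (cutIndex lam W l)).toFinset ≤
      wsum lam (W ∩ (l.drop (cutIndex lam W l)).toFinset) := by
  have hne : {k : ℕ | (1 / 2) * wsum lam (l.drop k).toFinset ≤
      wsum lam (W ∩ (l.drop k).toFinset)}.Nonempty := by
    refine ⟨l.length, ?_⟩
    simp [Set.mem_setOf_eq, wsum]
  exact Nat.sInf_mem hne

lemma stepList_toFinset [DecidableEq α] (lam : α → ℝ) (W : Finset α) (l : List α) :
    (stepList lam W l).toFinset = (l.drop (cutIndex lam W l)).toFinset \ W := by
  ext x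
  simp [stepList, List.mem_filter, Finset.mem_sdiff]

lemma toFinset_take_union_drop [DecidableEq α] (l : List α) (k : ℕ) :
    (l.take k).toFinset ∪ (l.drop k).toFinset = l.toFinset := by
  rw [← List.toFinset_append, List.take_append_drop]

theorem bad_implies_tower_nonempty {α : Type*} [Fintype α] [DecidableEq α]
    (ℋ : Finset (Finset α)) (lam : Finset α → α → ℝ)
    (hlam01 : ∀ H ∈ ℋ, ∀ x, 0 ≤ lam H x ∧ lam H x ≤ 1)
    (hsupp : ∀ H ∈ ℋ, ∀ x ∉ H, lam H x = 0)
    (hone : ∀ H ∈ ℋ, 1 ≤ ∑ x ∈ H, lam H x)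
    (ord : Finset α → List α) (hord : ∀ H ∈ ℋ, IsOrdering (lam H) H (ord H))
    {s : ℕ} (Ws : Fin s → Finset α) (hbad : IsBad ℋ lam Ws) :
    ∀ H ∈ ℋ, ∀ T : Fin s → Finset α, IsTower ℋ lam ord Ws H T →
      0 < ∑ i : Fin s, (T i).card := by
  intro H hH T hT
  by_contra hsum
  push_neg at hsum
  have hsum0 : ∑ i : Fin s, (T i).card = 0 := Nat.le_zero.mp hsum
  have hTe : ∀ i : Fin s, T i = ∅ := by
    intro i
    have := (Finset.sum_eq_zero_iff.mp hsum0) i (Finset.mem_univ i)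
    exact Finset.card_eq_zero.mp this
  obtain ⟨⟨b, hfeas⟩, _⟩ := hT
  obtain ⟨W', H', hH', hWsub, _, hR⟩ := hfeas
  simp only at hWsub hR
  set lam' := lam H' with hlam'
  set l0 := ord H' with hl0def
  set We := extT W' with hWe
  set U := univ.biUnion Ws with hU
  have hnn : ∀ x, 0 ≤ lam' x := fun x => (hlam01 H' hH' x).1
  have hl0 : l0.toFinset = H' := (hord H' hH').2.1
  set L : ℕ → Finset α := fun i => (procList lam' We l0 i).toFinset with hL
  have hZ : ∀ i : Fin s, Ws i ∪ T i = Ws i := by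
    intro i; rw [hTe i, Finset.union_empty]
  have hWeU : ∀ i : ℕ, We i ⊆ U := by
    intro i
    by_cases h : i < s
    · have : We i = W' ⟨i, h⟩ := by simp [hWe, extT, h]
      rw [this]
      refine ((hWsub ⟨i, h⟩).1.trans ?_)
      rw [hZ ⟨i, h⟩]
      exact Finset.subset_biUnion_of_mem Ws (Finset.mem_univ _)
    · have : We i = ∅ := by simp [hWe, extT, h]
      rw [this]; exact Finset.empty_subset _
  have hRU : ∀ i : Fin s, Rfrag lam' We l0 i ⊆ U := by
    intro i
    refine (hR i).trans ?_
    rw [hZ i]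
    exact Finset.subset_biUnion_of_mem Ws (Finset.mem_univ _)
  -- key single step facts
  have hstep : ∀ i : ℕ, wsum lam' (L (i + 1)) ≤ (1 / 2) * wsum lam' (L i)
      ∧ L (i + 1) ⊆ L i ∧ (i < s → L i \ L (i + 1) ⊆ U) := by
    intro i
    set l := procList lam' We l0 i with hl
    set c := cutIndex lam' (We i) l with hc
    set D := (l.drop c).toFinset with hD
    have hLsucc : L (i + 1) = D \ We i := by
      show (procList lam' We l0 (i + 1)).toFinset = D \ We i
      rw [show procList lam' We l0 (i + 1) = stepList lam' (We i) l from rfl]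
      exact stepList_toFinset lam' (We i) l
    have hDL : D ⊆ L i := by
      intro x hx
      simp only [hD, List.mem_toFinset] at hx
      exact List.mem_toFinset.mpr (List.drop_subset c l hx)
    have hLi : L i = (l.take c).toFinset ∪ D := (toFinset_take_union_drop l c).symm
    have hcut : (1 / 2) * wsum lam' D ≤ wsum lam' (We i ∩ D) := cutIndex_spec lam' (We i) l
    refine ⟨?_, ?_, ?_⟩
    · rw [hLsucc, wsum_sdiff' lam' D (We i)]
      have h1 : wsum lam' (D ∩ We i) = wsum lam' (We i ∩ D) := by rw [Finset.inter_comm]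
      have h2 : wsum lam' D ≤ wsum lam' (L i) := wsum_mono' lam' hnn hDL
      nlinarith [hcut, h2]
    · rw [hLsucc]
      exact (Finset.sdiff_subset).trans hDL
    · intro his
      intro x hx
      rw [Finset.mem_sdiff, hLi, Finset.mem_union] at hx
      obtain ⟨hx1, hx2⟩ := hx
      rw [hLsucc, Finset.mem_sdiff] at hx2
      push_neg at hx2
      rcases hx1 with hx1 | hx1
      · have hRe : Rfrag lam' We l0 (⟨i, his⟩ : Fin s) = (l.take c).toFinset := by
          simp only [Rfrag, bIdx, ← hl, ← hc]
        exact hRU ⟨i, his⟩ (by rw [hRe]; exact hx1)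
      · exact hWeU i (hx2 hx1)
  -- iterate
  have key : ∀ i : ℕ, wsum lam' (L i) ≤ (1 / 2) ^ i * wsum lam' (L 0)
      ∧ (i ≤ s → L 0 \ L i ⊆ U) := by
    intro i
    induction i with
    | zero => simp
    | succ n ih =>
      obtain ⟨ih1, ih2⟩ := ih
      constructor
      · calc wsum lam' (L (n + 1)) ≤ (1 / 2) * wsum lam' (L n) := (hstep n).1
          _ ≤ (1 / 2) * ((1 / 2) ^ n * wsum lam' (L 0)) := by linarith
          _ = (1 / 2) ^ (n + 1) * wsum lam' (L 0) := by ring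
      · intro hns x hx
        rw [Finset.mem_sdiff] at hx
        by_cases hxn : x ∈ L n
        · exact (hstep n).2.2 (Nat.lt_of_succ_le hns) (Finset.mem_sdiff.mpr ⟨hxn, hx.2⟩)
        · exact ih2 (Nat.le_of_succ_le hns) (Finset.mem_sdiff.mpr ⟨hx.1, hxn⟩)
  have hL0 : L 0 = H' := by
    show (procList lam' We l0 0).toFinset = H'
    rw [show procList lam' We l0 0 = l0 from rfl, hl0]
  obtain ⟨ks1, ks2⟩ := key s
  have hHsplit : wsum lam' H' = wsum lam' (H' ∩ L s) + wsum lam' (H' \ L s) :=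
    (Finset.sum_inter_add_sum_sdiff H' (L s) lam').symm
  have hd1 : wsum lam' (H' ∩ L s) ≤ wsum lam' (L s) :=
    wsum_mono' lam' hnn Finset.inter_subset_right
  have hd2 : wsum lam' (H' \ L s) ≤ wsum lam' (U ∩ H') := by
    refine wsum_mono' lam' hnn ?_
    intro x hx
    rw [Finset.mem_sdiff] at hx
    rw [Finset.mem_inter]
    exact ⟨ks2 le_rfl (Finset.mem_sdiff.mpr (by rw [hL0]; exact hx)), hx.1⟩
  rw [hL0] at ks1
  have hone' : (1 : ℝ) ≤ wsum lam' H' := hone H' hH'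
  have hbad' : wsum lam' (U ∩ H') < 1 - (1 / 2) ^ s := hbad H' hH'
  have hUnn : (0 : ℝ) ≤ wsum lam' (U ∩ H') := wsum_nonneg' lam' hnn _
  have hq1 : ((1 : ℝ) / 2) ^ s ≤ 1 := by
    apply pow_le_one₀ <;> norm_num
  nlinarith [ks1, hHsplit, hd1, hd2, hone', hbad', hUnn, hq1]
end

section
/- Let X be a finite set, t a positive integer, and w : 2^X → [0,1] a function supported on nonempty sets of size at most t; write W for the support of w. Let H ⊆ X satisfy ∑_{W ∈ W : W ⊆ H} w(W) ≥ 1, and define λ_H : X → [0,1] by λ_H(x) = ( ∑_{W ∈ W : x ∈ W, W ⊆ H} w(W)/|W| ) / ( ∑_{W ∈ W : W ⊆ H} w(W) ). Then ∑_{x∈H} λ_H(x) = 1, and for every S ⊆ X, ∑_{x ∈ S ∩ H} λ_H(x) ≤ 1 − 1/t + ( ∑_{W ∈ W : W ⊆ H ∩ S} w(W) ) / ( t · ∑_{W ∈ W : W ⊆ H} w(W) ). -/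
open Finset

variable {α : Type*}

open scoped Classical

theorem weight_vector_from_fractional_cover {α : Type*} [Fintype α] [DecidableEq α]
    (t : ℕ) (ht : 0 < t)
    (w : Finset α → ℝ) (hw01 : ∀ W, 0 ≤ w W ∧ w W ≤ 1)
    (hsupp : ∀ W : Finset α, (W = ∅ ∨ t < W.card) → w W = 0)
    (H : Finset α) (hcov : 1 ≤ ∑ W ∈ H.powerset, w W)
    (lamH : α → ℝ)
    (hlamH : ∀ x, lamH x =
      (∑ W ∈ H.powerset.filter (fun W => x ∈ W), w W / (W.card : ℝ)) /
        (∑ W ∈ H.powerset, w W)) :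
    (∑ x ∈ H, lamH x = 1) ∧
      ∀ S : Finset α, ∑ x ∈ S ∩ H, lamH x ≤
        1 - 1 / (t : ℝ) +
          (∑ W ∈ (H ∩ S).powerset, w W) / ((t : ℝ) * ∑ W ∈ H.powerset, w W) := by

  classical
  set D := ∑ W ∈ H.powerset, w W with hDdef
  have hD0 : (0:ℝ) < D := lt_of_lt_of_le one_pos hcov
  have key : ∀ T : Finset α,
      ∑ x ∈ T, lamH x = (∑ W ∈ H.powerset, ((T ∩ W).card : ℝ) * (w W / W.card)) / D := by
    intro T
    simp only [hlamH]
    rw [← Finset.sum_div]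
    congr 1
    calc ∑ x ∈ T, ∑ W ∈ H.powerset.filter (fun W => x ∈ W), w W / W.card
        = ∑ x ∈ T, ∑ W ∈ H.powerset, if x ∈ W then w W / W.card else 0 := by
          simp [Finset.sum_filter]
      _ = ∑ W ∈ H.powerset, ∑ x ∈ T, if x ∈ W then w W / W.card else 0 :=
          Finset.sum_comm
      _ = ∑ W ∈ H.powerset, ((T ∩ W).card : ℝ) * (w W / W.card) := by
          refine Finset.sum_congr rfl fun W _ => ?_
          rw [Finset.sum_ite_mem, Finset.sum_const, nsmul_eq_mul]
  have h1 : ∑ x ∈ H, lamH x = 1 := by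
    rw [key H]
    have hnum : ∑ W ∈ H.powerset, ((H ∩ W).card : ℝ) * (w W / W.card) = D := by
      refine Finset.sum_congr rfl fun W hW => ?_
      rw [Finset.mem_powerset] at hW
      rw [Finset.inter_eq_right.mpr hW]
      rcases eq_or_ne W ∅ with h | h
      · simp [h, hsupp ∅ (Or.inl rfl)]
      · have hc : (W.card : ℝ) ≠ 0 := by
          simpa [Finset.card_eq_zero] using h
        field_simp
    rw [hnum, div_self hD0.ne']
  refine ⟨h1, fun S => ?_⟩
  rw [key (S ∩ H)]
  set A := ∑ W ∈ (H ∩ S).powerset, w W with hAdef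
  rw [div_le_iff₀ hD0]
  have hbound : ∀ W ∈ H.powerset,
      ((S ∩ H ∩ W).card : ℝ) * (w W / W.card) ≤
        (1 - 1/(t:ℝ)) * w W + (if W ⊆ S then w W * (1/(t:ℝ)) else 0) := by
    intro W hW
    rw [Finset.mem_powerset] at hW
    have hw0 := (hw01 W).1
    have ht' : (0:ℝ) < (t:ℝ) := by exact_mod_cast ht
    by_cases hWS : W ⊆ S
    · simp only [if_pos hWS]
      have hinter : S ∩ H ∩ W = W := by
        apply Finset.inter_eq_right.mpr
        exact Finset.subset_inter hWS hW
      rw [hinter]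
      rcases eq_or_ne W ∅ with h | h
      · simp [h, hsupp ∅ (Or.inl rfl)]
      · have hc : (W.card : ℝ) ≠ 0 := by
          simpa [Finset.card_eq_zero] using h
        rw [mul_div_cancel₀ _ hc]
        have : (1 - 1/(t:ℝ)) * w W + w W * (1/(t:ℝ)) = w W := by ring
        rw [this]
    · simp only [if_neg hWS, add_zero]
      rcases eq_or_lt_of_le hw0 with h0 | h0
      · rw [← h0]; simp
      have hWne : W ≠ ∅ := by
        rintro rfl
        exact absurd (hsupp ∅ (Or.inl rfl)) h0.ne'
      have hcard : 0 < W.card := Finset.card_pos.mpr (Finset.nonempty_iff_ne_empty.mpr hWne)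
      have hct : W.card ≤ t := by
        by_contra hc
        exact absurd (hsupp W (Or.inr (lt_of_not_ge hc))) h0.ne'
      have hlt : (S ∩ H ∩ W).card < W.card := by
        apply Finset.card_lt_card
        constructor
        · exact Finset.inter_subset_right
        · intro hsub
          obtain ⟨x, hxW, hxS⟩ := Finset.not_subset.mp hWS
          exact hxS (Finset.mem_inter.mp (Finset.mem_inter.mp (hsub hxW)).1).1
      have hle : ((S ∩ H ∩ W).card : ℝ) ≤ (W.card : ℝ) - 1 := by
        have : (S ∩ H ∩ W).card + 1 ≤ W.card := hlt
        have := (Nat.cast_le (α := ℝ)).mpr this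
        push_cast at this
        linarith
      have hcpos : (0:ℝ) < (W.card : ℝ) := by exact_mod_cast hcard
      have hratio : ((S ∩ H ∩ W).card : ℝ) * (w W / W.card) ≤
          ((W.card : ℝ) - 1) * (w W / W.card) := by
        apply mul_le_mul_of_nonneg_right hle
        positivity
      refine hratio.trans ?_
      have heq : ((W.card : ℝ) - 1) * (w W / W.card) = (1 - 1/(W.card:ℝ)) * w W := by
        field_simp
      rw [heq]
      apply mul_le_mul_of_nonneg_right _ hw0
      have : 1/(t:ℝ) ≤ 1/(W.card:ℝ) := by
        apply one_div_le_one_div_of_le hcpos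
        exact_mod_cast hct
      linarith
  have hfil : H.powerset.filter (fun W => W ⊆ S) = (H ∩ S).powerset := by
    ext W
    simp only [Finset.mem_filter, Finset.mem_powerset, Finset.subset_inter_iff]
  calc ∑ W ∈ H.powerset, ((S ∩ H ∩ W).card : ℝ) * (w W / W.card)
      ≤ ∑ W ∈ H.powerset, ((1 - 1/(t:ℝ)) * w W + (if W ⊆ S then w W * (1/(t:ℝ)) else 0)) :=
        Finset.sum_le_sum hbound
    _ = (1 - 1/(t:ℝ)) * D + A * (1/(t:ℝ)) := by
        rw [Finset.sum_add_distrib, ← Finset.mul_sum, ← Finset.sum_filter, hfil,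
          ← Finset.sum_mul]
    _ = (1 - 1/(t:ℝ) + A / ((t:ℝ) * D)) * D := by
        have ht' : (t:ℝ) ≠ 0 := by positivity
        field_simp
end
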